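/- For every t > 0, the Laplace transform of the normalized return time on the induced system satisfies φ_A(t) := ∫_A e^{-μ(A)·τ_A·t} dμ_A = 1 - (e^{μ(A)t}-1)/μ(A) + (e^{μ(A)t}-1)/μ(A) · (1 - e^{-μ(A)t}) · ∑_{k=0}^∞ e^{-μ(A)kt}·s_A(k). -/

import Mathlib

open MeasureTheory Filter Topology
open scoped ENNReal NNReal

noncomputable def hitTime {X : Type*} (T : X → X) (A : Set X) (x : X) : ℕ∞ :=
  sInf ((↑) '' {k : ℕ | 1 ≤ k ∧ T^[k] x ∈ A})

noncomputable def sweep {X : Type*} [MeasurableSpace X] (μ : Measure X) (T : X → X)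
    (A : Set X) (k : ℕ) : ℝ :=
  (μ (⋂ i ∈ Finset.range k, T^[i] ⁻¹' Aᶜ)).toReal

lemma hitTime_gt_iff {X : Type*} (T : X → X) (A : Set X) (x : X) (k : ℕ) :
    (k : ℕ∞) < hitTime T A x ↔ ∀ i, 1 ≤ i → i ≤ k → T^[i] x ∉ A := by
  rw [hitTime, show ((k:ℕ∞) < sInf ((↑) '' {k : ℕ | 1 ≤ k ∧ T^[k] x ∈ A})) ↔
      ((k:ℕ∞) + 1 ≤ sInf ((↑) '' {k : ℕ | 1 ≤ k ∧ T^[k] x ∈ A})) from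
    (ENat.add_one_le_iff (by simp)).symm, le_sInf_iff]
  constructor
  · intro h i h1 hik hmem
    have := h (i : ℕ∞) ⟨i, ⟨h1, hmem⟩, rfl⟩
    have : (k:ℕ∞) < i := ENat.add_one_le_iff (by simp) |>.mp this
    exact absurd (by exact_mod_cast this) (not_lt.mpr hik)
  · rintro h _ ⟨i, ⟨h1, hmem⟩, rfl⟩
    rw [ENat.add_one_le_iff (by simp)]
    by_contra hc
    exact h i h1 (by exact_mod_cast not_lt.mp hc) hmem

lemma hitTime_pos {X : Type*} (T : X → X) (A : Set X) (x : X) :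
    (0 : ℕ∞) < hitTime T A x := by
  have := (hitTime_gt_iff T A x 0).mpr (fun i h1 h0 => by omega)
  simpa using this

lemma gtSet_eq {X : Type*} (T : X → X) (A : Set X) (k : ℕ) :
    {x | (k : ℕ∞) < hitTime T A x} = T ⁻¹' (⋂ i ∈ Finset.range k, T^[i] ⁻¹' Aᶜ) := by
  ext x
  simp only [Set.mem_setOf_eq, hitTime_gt_iff, Set.mem_preimage, Set.mem_iInter,
    Finset.mem_range, Set.mem_compl_iff]
  constructor
  · intro h i hi
    have := h (i+1) (by omega) (by omega)
    rwa [Function.iterate_succ_apply] at this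
  · intro h i h1 hik
    obtain ⟨j, rfl⟩ : ∃ j, i = j + 1 := ⟨i - 1, by omega⟩
    rw [Function.iterate_succ_apply]
    exact h j (by omega)

theorem laplace_return_time {X : Type*} [MeasurableSpace X] (μ : Measure X)
    [IsProbabilityMeasure μ] (T : X → X) (hE : Ergodic T μ)
    (A : Set X) (hA : MeasurableSet A) (hpos : 0 < μ A) (t : ℝ) (ht : 0 < t) :
    ∫ x, Real.exp (-((μ A).toReal * ((hitTime T A x).toNat : ℝ) * t))
        ∂(ProbabilityTheory.cond μ A) =
      1 - (Real.exp ((μ A).toReal * t) - 1) / (μ A).toReal +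
        (Real.exp ((μ A).toReal * t) - 1) / (μ A).toReal *
          (1 - Real.exp (-((μ A).toReal * t))) *
            ∑' k : ℕ, Real.exp (-((μ A).toReal * k * t)) * sweep μ T A k := by
  have hT : Measurable T := hE.toMeasurePreserving.measurable
  set a : ℝ := (μ A).toReal with ha
  have hapos : 0 < a := ENNReal.toReal_pos hpos.ne' (measure_ne_top μ A)
  have hale : a ≤ 1 := by
    rw [ha]
    exact ENNReal.toReal_le_of_le_ofReal one_pos.le (by simpa using prob_le_one)
  set q : ℝ := Real.exp (-(a * t)) with hq
  have hq0 : 0 < q := Real.exp_pos _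
  have hq1 : q < 1 := by
    rw [hq]
    apply Real.exp_lt_one_iff.mpr
    nlinarith
  -- the sweep sets
  set U : ℕ → Set X := fun k => ⋂ i ∈ Finset.range k, T^[i] ⁻¹' Aᶜ with hU
  have hUm : ∀ k, MeasurableSet (U k) := fun k =>
    Finset.measurableSet_biInter _ fun i _ => (hA.compl.preimage (hT.iterate i))
  set s : ℕ → ℝ := fun k => sweep μ T A k with hs
  have hsU : ∀ k, s k = (μ (U k)).toReal := fun k => rfl
  have hs0 : s 0 = 1 := by simp [hsU, hU]
  have hsnn : ∀ k, 0 ≤ s k := fun k => ENNReal.toReal_nonneg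
  have hsle : ∀ k, s k ≤ 1 := fun k => by
    rw [hsU]
    exact ENNReal.toReal_le_of_le_ofReal one_pos.le (by simpa using prob_le_one)
  -- the sets G k = {τ > k}
  set G : ℕ → Set X := fun k => {x | (k : ℕ∞) < hitTime T A x} with hG
  have hGU : ∀ k, G k = T ⁻¹' U k := fun k => gtSet_eq T A k
  have hGm : ∀ k, MeasurableSet (G k) := fun k => (hGU k) ▸ ((hUm k).preimage hT)
  have hmuG : ∀ k, μ (G k) = μ (U k) := fun k => by
    rw [hGU k]; exact hE.toMeasurePreserving.measure_preimage (hUm k).nullMeasurableSet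
  -- U (k+1) = Aᶜ ∩ G k
  have hUsucc : ∀ k, U (k+1) = Aᶜ ∩ G k := by
    intro k
    rw [hGU]
    ext x
    simp only [hU, Set.mem_iInter, Finset.mem_range, Set.mem_inter_iff, Set.mem_preimage,
      Set.mem_compl_iff]
    constructor
    · intro h
      refine ⟨by simpa using h 0 (by omega), fun i hi => ?_⟩
      have := h (i+1) (by omega)
      rwa [Function.iterate_succ_apply] at this
    · rintro ⟨h0, h⟩ i hi
      match i with
      | 0 => simpa using h0
      | (j+1) =>
        rw [Function.iterate_succ_apply]
        exact h j (by omega)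
  -- b k = μ (A ∩ G k)
  set b : ℕ → ℝ := fun k => (μ (A ∩ G k)).toReal with hb
  have hbnn : ∀ k, 0 ≤ b k := fun k => ENNReal.toReal_nonneg
  have hble : ∀ k, b k ≤ 1 := fun k => by
    rw [hb]
    exact ENNReal.toReal_le_of_le_ofReal one_pos.le (by simpa using prob_le_one)
  have hb0 : b 0 = a := by
    have hAG : A ∩ G 0 = A := Set.inter_eq_left.mpr fun x hx => by
      simpa [hG] using hitTime_pos T A x
    simp only [hb, hAG, ha]
  have hbs : ∀ k, b k = s k - s (k+1) := by
    intro k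
    have hdisj : Disjoint (A ∩ G k) (Aᶜ ∩ G k) :=
      Set.disjoint_left.mpr fun x hx hx' => hx'.1 hx.1
    have hsplit : (A ∩ G k) ∪ (Aᶜ ∩ G k) = G k := by
      rw [← Set.union_inter_distrib_right, Set.union_compl_self, Set.univ_inter]
    have : μ ((A ∩ G k) ∪ (Aᶜ ∩ G k)) = μ (A ∩ G k) + μ (Aᶜ ∩ G k) := measure_union hdisj ((hA.compl).inter (hGm k))
    rw [hsplit, ← hUsucc k, hmuG k] at this
    have h1 : (μ (U k)).toReal = (μ (A ∩ G k)).toReal + (μ (U (k+1))).toReal := by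
      rw [this, ENNReal.toReal_add (measure_ne_top _ _) (measure_ne_top _ _)]
    rw [hb, hsU, hsU]
    linarith
  -- the sets E k = A ∩ {τ = k}
  set E : ℕ → Set X := fun k => A ∩ {x | hitTime T A x = (k : ℕ∞)} with hEdef
  have hE0 : E 0 = ∅ := by
    ext x
    simp only [hEdef, Set.mem_inter_iff, Set.mem_setOf_eq, Set.mem_empty_iff_false, iff_false]
    rintro ⟨-, h⟩
    exact absurd h (by simpa using (hitTime_pos T A x).ne')
  have hEsucc : ∀ k, E (k+1) = (A ∩ G k) \ (A ∩ G (k+1)) := by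
    intro k
    ext x
    simp only [hEdef, hG, Set.mem_inter_iff, Set.mem_setOf_eq, Set.mem_diff]
    constructor
    · rintro ⟨hxA, hτ⟩
      refine ⟨⟨hxA, ?_⟩, fun h => ?_⟩
      · rw [hτ]; exact_mod_cast Nat.lt_succ_self k
      · rw [hτ] at h
        exact absurd (h.2) (by simp)
    · rintro ⟨⟨hxA, h1⟩, h2⟩
      refine ⟨hxA, ?_⟩
      have h2' : hitTime T A x ≤ (k+1 : ℕ) := by
        by_contra hc
        exact h2 ⟨hxA, not_le.mp hc⟩
      have h1' : ((k:ℕ∞) + 1) ≤ hitTime T A x := (ENat.add_one_le_iff (by simp)).mpr h1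
      refine le_antisymm h2' ?_
      exact_mod_cast h1'
  have hEm : ∀ k, MeasurableSet (E k) := by
    intro k
    match k with
    | 0 => rw [hE0]; exact MeasurableSet.empty
    | (j+1) => rw [hEsucc j]; exact ((hA.inter (hGm j)).diff (hA.inter (hGm (j+1))))
  have hEsub : ∀ k, E k ⊆ A := fun k => Set.inter_subset_left
  set m : ℕ → ℝ := fun k => (μ (E k)).toReal with hm
  have hm0 : m 0 = 0 := by simp [hm, hE0]
  have hmb : ∀ k, m (k+1) = b k - b (k+1) := by
    intro k
    have hsub : A ∩ G (k+1) ⊆ A ∩ G k := by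
      apply Set.inter_subset_inter_right
      intro x hx
      simp only [hG, Set.mem_setOf_eq] at *
      exact lt_trans (by exact_mod_cast Nat.lt_succ_self k) hx
    simp only [hm, hb, hEsucc k]
    rw [measure_diff hsub ((hA.inter (hGm (k+1))).nullMeasurableSet) (measure_ne_top _ _),
      ENNReal.toReal_sub_of_le (measure_mono hsub) (measure_ne_top _ _)]
  have hmnn : ∀ k, 0 ≤ m k := fun k => ENNReal.toReal_nonneg
  have hmle : ∀ k, m k ≤ 1 := fun k => by
    rw [hm]
    exact ENNReal.toReal_le_of_le_ofReal one_pos.le (by simpa using prob_le_one)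
  -- Poincaré recurrence
  have hPoin : μ (A ∩ {x | hitTime T A x = ⊤}) = 0 := by
    refine measure_mono_null ?_
      ((hE.toMeasurePreserving.conservative).measure_mem_forall_ge_image_notMem_eq_zero
        hA.nullMeasurableSet 1)
    rintro x ⟨hxA, hτ⟩
    refine ⟨hxA, fun mm hmm hmem => ?_⟩
    have hlt : (mm : ℕ∞) < hitTime T A x := by
      simp only [Set.mem_setOf_eq] at hτ
      rw [hτ]
      exact lt_of_le_of_ne le_top (by simp)
    exact ((hitTime_gt_iff T A x mm).mp hlt) mm hmm le_rfl hmem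
  -- the restricted measure
  set ν : Measure X := μ.restrict A with hν
  have hνuniv : ν Set.univ = μ A := by rw [hν, Measure.restrict_apply_univ]
  have hνle : ∀ S : Set X, ν S ≤ 1 := fun S => by
    calc ν S ≤ ν Set.univ := measure_mono (Set.subset_univ S)
    _ = μ A := hνuniv
    _ ≤ 1 := prob_le_one
  -- pointwise rewriting of the integrand
  have hexp : ∀ x, Real.exp (-(a * ((hitTime T A x).toNat : ℝ) * t))
      = q ^ (hitTime T A x).toNat := by
    intro x
    rw [hq, ← Real.exp_nat_mul]
    congr 1
    ring
  -- a.e. expansion into indicator series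
  have hF : ∀ᵐ x ∂ν, q ^ (hitTime T A x).toNat
      = ∑' k : ℕ, (E k).indicator (fun _ => q ^ k) x := by
    have h1 : ∀ᵐ x ∂ν, x ∈ A := ae_restrict_mem hA
    have h3 : ∀ᵐ x ∂ν, x ∉ A ∩ {x | hitTime T A x = ⊤} :=
      ae_restrict_of_ae (measure_eq_zero_iff_ae_notMem.mp hPoin)
    filter_upwards [h1, h3] with x hxA hxbad
    have hne : hitTime T A x ≠ ⊤ := fun h => hxbad ⟨hxA, h⟩
    obtain ⟨n, hn⟩ := WithTop.ne_top_iff_exists.mp hne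
    have hxn : q ^ (hitTime T A x).toNat = q ^ n := by
      rw [← hn]
      rfl
    rw [hxn, tsum_eq_single n]
    · have hxE : x ∈ E n := ⟨hxA, hn.symm⟩
      exact (Set.indicator_of_mem hxE (fun _ => q ^ n)).symm
    · intro mm hmm
      apply Set.indicator_of_notMem
      rintro ⟨-, hτ⟩
      simp only [Set.mem_setOf_eq] at hτ
      rw [← hn] at hτ
      exact hmm (WithTop.coe_injective hτ.symm)
  -- the integral over the restricted measure
  have hInt : ∫ x, q ^ (hitTime T A x).toNat ∂ν = ∑' k : ℕ, q ^ k * m k := by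
    rw [integral_congr_ae hF, integral_tsum]
    · refine tsum_congr fun k => ?_
      rw [integral_indicator_const _ (hEm k), hν, measureReal_def, Measure.restrict_apply (hEm k),
        Set.inter_eq_self_of_subset_left (hEsub k), smul_eq_mul]
      simp only [hm]
      ring
    · exact fun k => (measurable_const.indicator (hEm k)).aestronglyMeasurable
    · have hbound : ∀ k : ℕ, (∫⁻ x, ‖(E k).indicator (fun _ => q ^ k) x‖₊ ∂ν)
          ≤ (‖q‖₊ : ℝ≥0∞) ^ k := by
        intro k
        have : ∀ x, (‖(E k).indicator (fun _ => q ^ k) x‖₊ : ℝ≥0∞) ≤ (‖q ^ k‖₊ : ℝ≥0∞) := by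
          intro x
          by_cases hx : x ∈ E k
          · rw [Set.indicator_of_mem hx]
          · rw [Set.indicator_of_notMem hx]; simp
        calc (∫⁻ x, ‖(E k).indicator (fun _ => q ^ k) x‖₊ ∂ν)
            ≤ ∫⁻ _, (‖q ^ k‖₊ : ℝ≥0∞) ∂ν := lintegral_mono fun x => this x
          _ = (‖q ^ k‖₊ : ℝ≥0∞) * ν Set.univ := lintegral_const _
          _ ≤ (‖q ^ k‖₊ : ℝ≥0∞) * 1 := mul_le_mul_right (hνle _) _
          _ = (‖q‖₊ : ℝ≥0∞) ^ k := by rw [mul_one, nnnorm_pow]; push_cast; ring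
      refine ne_top_of_le_ne_top ?_ (ENNReal.tsum_le_tsum hbound)
      rw [ENNReal.tsum_geometric]
      refine ENNReal.inv_ne_top.mpr ?_
      rw [ne_eq, tsub_eq_zero_iff_le, not_le]
      have hqn : (‖q‖₊ : ℝ≥0) < 1 := by
        have h' : ‖q‖ < 1 := by rw [Real.norm_eq_abs, abs_of_pos hq0]; exact hq1
        exact_mod_cast h'
      exact_mod_cast ENNReal.coe_lt_one_iff.mpr hqn
  -- summability facts
  have hgeom : Summable (fun k : ℕ => q ^ k) := summable_geometric_of_lt_one hq0.le hq1
  have hsum_of_le : ∀ (f : ℕ → ℝ), (∀ k, 0 ≤ f k) → (∀ k, f k ≤ 1) →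
      Summable (fun k : ℕ => q ^ k * f k) := by
    intro f h0 h1
    refine Summable.of_nonneg_of_le (fun k => mul_nonneg (pow_nonneg hq0.le k) (h0 k))
      (fun k => ?_) hgeom
    calc q ^ k * f k ≤ q ^ k * 1 := by
          exact mul_le_mul_of_nonneg_left (h1 k) (pow_nonneg hq0.le k)
      _ = q ^ k := mul_one _
  have hSs : Summable (fun k : ℕ => q ^ k * s k) := hsum_of_le s hsnn hsle
  have hSb : Summable (fun k : ℕ => q ^ k * b k) := hsum_of_le b hbnn hble
  have hSm : Summable (fun k : ℕ => q ^ k * m k) := hsum_of_le m hmnn hmle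
  have hSs1 : Summable (fun k : ℕ => q ^ k * s (k + 1)) :=
    hsum_of_le (fun k => s (k+1)) (fun k => hsnn _) (fun k => hsle _)
  set S : ℝ := ∑' k : ℕ, q ^ k * s k with hSdef
  set B : ℝ := ∑' k : ℕ, q ^ k * b k with hBdef
  -- shifted sum identities
  have hshiftb : ∑' k : ℕ, q ^ (k+1) * b (k+1) = B - b 0 := by
    have := Summable.tsum_eq_zero_add hSb
    rw [pow_zero, one_mul] at this
    rw [hBdef]
    linarith [this]
  have hshifts : ∑' k : ℕ, q ^ (k+1) * s (k+1) = S - 1 := by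
    have := Summable.tsum_eq_zero_add hSs
    rw [pow_zero, one_mul, hs0] at this
    rw [hSdef]
    linarith [this]
  have hCs : ∑' k : ℕ, q ^ k * s (k + 1) = (S - 1) / q := by
    rw [eq_div_iff hq0.ne', mul_comm, ← tsum_mul_left, ← hshifts]
    exact tsum_congr fun k => by ring
  have hB : B = S - (S - 1) / q := by
    rw [hBdef, ← hCs]
    rw [show (fun k : ℕ => q ^ k * b k) = fun k : ℕ => q ^ k * s k - q ^ k * s (k+1) from
      funext fun k => by rw [hbs k]; ring]
    exact Summable.tsum_sub hSs hSs1
  have hSm1 : Summable (fun k : ℕ => q ^ (k+1) * b (k+1)) := by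
    have := (summable_nat_add_iff 1).mpr hSb
    exact this
  have hSmq : Summable (fun k : ℕ => q ^ (k+1) * b k) := by
    have : (fun k : ℕ => q ^ (k+1) * b k) = fun k : ℕ => q * (q ^ k * b k) := by
      funext k; ring
    rw [this]
    exact hSb.mul_left q
  have hM : ∑' k : ℕ, q ^ k * m k = q * B - (B - b 0) := by
    rw [Summable.tsum_eq_zero_add hSm, pow_zero, one_mul, hm0, zero_add]
    have h1 : (fun k : ℕ => q ^ (k+1) * m (k+1))
        = fun k : ℕ => q ^ (k+1) * b k - q ^ (k+1) * b (k+1) := by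
      funext k; rw [hmb k]; ring
    rw [h1, Summable.tsum_sub hSmq hSm1, hshiftb]
    congr 1
    rw [← tsum_mul_left]
    refine tsum_congr fun k => ?_
    ring
  -- put everything together
  have hcond : ProbabilityTheory.cond μ A = (μ A)⁻¹ • ν := rfl
  rw [hcond, integral_smul_measure]
  simp only [hexp]
  rw [hInt, hM, hB, hb0]
  have htsum : ∑' k : ℕ, Real.exp (-(a * (k : ℝ) * t)) * sweep μ T A k = S := by
    rw [hSdef]
    refine tsum_congr fun k => ?_
    rw [hq, ← Real.exp_nat_mul]
    congr 2
    ring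
  rw [htsum]
  have hqE : Real.exp (a * t) = q⁻¹ := by
    rw [hq, ← Real.exp_neg, neg_neg]
  rw [hqE]
  have hainv : ((μ A)⁻¹).toReal = a⁻¹ := by rw [ha, ← ENNReal.toReal_inv]
  rw [hainv, smul_eq_mul]
  field_simp
  ring
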